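/- For the concatenated quantum Hamming code using the [[N_l, K_l, 3]] quantum Hamming code with N_l = 2^{l+2} - 1 and K_l = N_l - 2(l+2) at each level l, the total number of physical qubits N^{(L)} = ∏_{l=1}^{L} N_l and logical qubits K^{(L)} = ∏_{l=1}^{L} K_l satisfy that the overhead ratio N^{(L)} / K^{(L)} is bounded above by a constant independent of L. -/

import Mathlib

lemma ham_pow_lb (l : ℕ) (hl : 1 ≤ l) : 2 * (l + 2) + 3 ≤ 2 ^ (l + 2) + 2 := by
  have h : l + 1 ≤ 2 ^ l := Nat.lt_two_pow_self (n := l)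
  have h2 : 2 ^ (l + 2) = 4 * 2 ^ l := by ring
  omega

lemma ham_castN (l : ℕ) : ((2 ^ (l + 2) - 1 : ℕ) : ℝ) = 2 ^ (l + 2) - 1 := by
  have h : 1 ≤ 2 ^ (l + 2) := Nat.one_le_two_pow
  push_cast [h]
  ring

lemma ham_castK (l : ℕ) (hl : 1 ≤ l) :
    ((2 ^ (l + 2) - 2 * (l + 2) - 1 : ℕ) : ℝ) = 2 ^ (l + 2) - 2 * ((l : ℝ) + 2) - 1 := by
  have h := ham_pow_lb l hl
  have h1 : 2 * (l + 2) ≤ 2 ^ (l + 2) := by omega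
  have h2 : 1 ≤ 2 ^ (l + 2) - 2 * (l + 2) := by omega
  rw [Nat.cast_sub h2, Nat.cast_sub h1]
  push_cast
  ring

lemma ham_K_one_le (l : ℕ) (hl : 1 ≤ l) :
    (1 : ℝ) ≤ (2 : ℝ) ^ (l + 2) - 2 * ((l : ℝ) + 2) - 1 := by
  have h : l + 1 ≤ 2 ^ l := Nat.lt_two_pow_self (n := l)
  have h2 : 2 ^ (l + 2) = 4 * 2 ^ l := by ring
  have h3 : 2 * (l + 2) + 2 ≤ 2 ^ (l + 2) := by omega
  have h4 : ((2 * (l + 2) + 2 : ℕ) : ℝ) ≤ ((2 ^ (l + 2) : ℕ) : ℝ) := by exact_mod_cast h3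
  push_cast at h4
  linarith

lemma ham_main (n : ℕ) :
    (2 : ℝ) ^ (n + 4) * ∏ l ∈ Finset.Icc 1 (n + 4), ((2 : ℝ) ^ (l + 2) - 1)
      ≤ 55 * ((2 : ℝ) ^ (n + 4) - ((n : ℝ) + 8)) *
          ∏ l ∈ Finset.Icc 1 (n + 4), ((2 : ℝ) ^ (l + 2) - 2 * ((l : ℝ) + 2) - 1) := by
  induction n with
  | zero =>
      norm_num [show Finset.Icc 1 4 = {1, 2, 3, 4} from rfl, Finset.prod_insert]
  | succ n ih =>
      have hQ : (0 : ℝ) ≤ ∏ l ∈ Finset.Icc 1 (n + 4), ((2 : ℝ) ^ (l + 2) - 2 * ((l : ℝ) + 2) - 1) := by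
        apply Finset.prod_nonneg
        intro l hl
        have := ham_K_one_le l (Finset.mem_Icc.mp hl).1
        linarith
      have h15 : (1 : ℕ) ≤ n + 4 + 1 := by omega
      rw [show n + 1 + 4 = (n + 4) + 1 from rfl, Finset.prod_Icc_succ_top h15,
        Finset.prod_Icc_succ_top h15]
      set P := ∏ l ∈ Finset.Icc 1 (n + 4), ((2 : ℝ) ^ (l + 2) - 1) with hP
      set Q := ∏ l ∈ Finset.Icc 1 (n + 4), ((2 : ℝ) ^ (l + 2) - 2 * ((l : ℝ) + 2) - 1) with hQd
      have hone : (1 : ℝ) ≤ (2 : ℝ) ^ n := one_le_pow₀ (by norm_num)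
      have hz : (16 : ℝ) ≤ (2 : ℝ) ^ (n + 4) := by
        have : (2 : ℝ) ^ (n + 4) = 2 ^ n * 16 := by ring
        nlinarith
      have hN : (0 : ℝ) ≤ 2 * ((2 : ℝ) ^ (n + 4 + 1 + 2) - 1) := by
        have : (1 : ℝ) ≤ (2 : ℝ) ^ (n + 4 + 1 + 2) := one_le_pow₀ (by norm_num)
        linarith
      have hn0 : (0 : ℝ) ≤ (n : ℝ) := Nat.cast_nonneg n
      have key : 2 * ((2 : ℝ) ^ (n + 4 + 1 + 2) - 1) * ((2 : ℝ) ^ (n + 4) - ((n : ℝ) + 8))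
          ≤ ((2 : ℝ) ^ (n + 1 + 4) - ((n : ℝ) + 1 + 8)) *
            ((2 : ℝ) ^ (n + 4 + 1 + 2) - 2 * (((n + 4 + 1 : ℕ) : ℝ) + 2) - 1) := by
        have e1 : (2 : ℝ) ^ (n + 4 + 1 + 2) = 8 * 2 ^ (n + 4) := by ring
        have e2 : (2 : ℝ) ^ (n + 1 + 4) = 2 * 2 ^ (n + 4) := by ring
        push_cast
        rw [e1, e2]
        nlinarith [mul_nonneg hn0 (le_trans (by norm_num) hz)]
      calc (2 : ℝ) ^ (n + 1 + 4) * (P * ((2 : ℝ) ^ (n + 4 + 1 + 2) - 1))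
          = 2 * ((2 : ℝ) ^ (n + 4 + 1 + 2) - 1) * ((2 : ℝ) ^ (n + 4) * P) := by ring
        _ ≤ 2 * ((2 : ℝ) ^ (n + 4 + 1 + 2) - 1) *
              (55 * ((2 : ℝ) ^ (n + 4) - ((n : ℝ) + 8)) * Q) :=
            mul_le_mul_of_nonneg_left ih hN
        _ = 55 * (2 * ((2 : ℝ) ^ (n + 4 + 1 + 2) - 1) * ((2 : ℝ) ^ (n + 4) - ((n : ℝ) + 8))) * Q := by
            ring
        _ ≤ 55 * (((2 : ℝ) ^ (n + 1 + 4) - ((n : ℝ) + 1 + 8)) *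
              ((2 : ℝ) ^ (n + 4 + 1 + 2) - 2 * (((n + 4 + 1 : ℕ) : ℝ) + 2) - 1)) * Q := by
            apply mul_le_mul_of_nonneg_right _ hQ
            exact mul_le_mul_of_nonneg_left key (by norm_num)
        _ = 55 * ((2 : ℝ) ^ (n + 1 + 4) - ((n : ℝ) + 1 + 8)) *
              (Q * ((2 : ℝ) ^ (n + 4 + 1 + 2) - 2 * (((n + 4 + 1 : ℕ) : ℝ) + 2) - 1)) := by ring
        _ = 55 * ((2 : ℝ) ^ (n + 4 + 1) - (((n + 1 : ℕ) : ℝ) + 8)) *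
              (Q * ((2 : ℝ) ^ (n + 4 + 1 + 2) - 2 * (((n + 4 + 1 : ℕ) : ℝ) + 2) - 1)) := by
            push_cast
            ring

/-- Constant space overhead of the concatenated quantum Hamming code:
with `N_l = 2^(l+2) - 1` and `K_l = 2^(l+2) - 2(l+2) - 1`, the overhead ratio
`N^(L)/K^(L) = (∏_{l=1}^L N_l)/(∏_{l=1}^L K_l)` is bounded by a constant independent of `L`. -/
theorem concatenated_hamming_constant_overhead :
    ∃ C : ℝ, ∀ L : ℕ,
      ((∏ l ∈ Finset.Icc 1 L, (2 ^ (l + 2) - 1 : ℕ) : ℕ) : ℝ) /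
        ((∏ l ∈ Finset.Icc 1 L, (2 ^ (l + 2) - 2 * (l + 2) - 1 : ℕ) : ℕ) : ℝ) ≤ C := by
  refine ⟨55, fun L => ?_⟩
  have hcastP : ((∏ l ∈ Finset.Icc 1 L, (2 ^ (l + 2) - 1 : ℕ) : ℕ) : ℝ)
      = ∏ l ∈ Finset.Icc 1 L, ((2 : ℝ) ^ (l + 2) - 1) := by
    rw [Nat.cast_prod]
    exact Finset.prod_congr rfl fun l _ => ham_castN l
  have hcastQ : ((∏ l ∈ Finset.Icc 1 L, (2 ^ (l + 2) - 2 * (l + 2) - 1 : ℕ) : ℕ) : ℝ)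
      = ∏ l ∈ Finset.Icc 1 L, ((2 : ℝ) ^ (l + 2) - 2 * ((l : ℝ) + 2) - 1) := by
    rw [Nat.cast_prod]
    exact Finset.prod_congr rfl fun l hl => ham_castK l (Finset.mem_Icc.mp hl).1
  rw [hcastP, hcastQ]
  have hQpos : (0 : ℝ) < ∏ l ∈ Finset.Icc 1 L, ((2 : ℝ) ^ (l + 2) - 2 * ((l : ℝ) + 2) - 1) :=
    Finset.prod_pos fun l hl =>
      lt_of_lt_of_le one_pos (ham_K_one_le l (Finset.mem_Icc.mp hl).1)
  rw [div_le_iff₀ hQpos]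
  rcases le_or_gt L 3 with hL | hL
  · interval_cases L
    · simp
    · norm_num [show Finset.Icc 1 1 = {1} from rfl]
    · norm_num [show Finset.Icc 1 2 = {1, 2} from rfl, Finset.prod_insert]
    · norm_num [show Finset.Icc 1 3 = {1, 2, 3} from rfl, Finset.prod_insert]
  · obtain ⟨n, rfl⟩ : ∃ n, L = n + 4 := ⟨L - 4, by omega⟩
    have h := ham_main n
    have hn0 : (0 : ℝ) ≤ (n : ℝ) := Nat.cast_nonneg n
    have hQ0 : (0 : ℝ) ≤ ∏ l ∈ Finset.Icc 1 (n + 4), ((2 : ℝ) ^ (l + 2) - 2 * ((l : ℝ) + 2) - 1) :=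
      le_of_lt hQpos
    have hzpos : (0 : ℝ) < (2 : ℝ) ^ (n + 4) := by positivity
    have h2 : 55 * ((2 : ℝ) ^ (n + 4) - ((n : ℝ) + 8)) *
        ∏ l ∈ Finset.Icc 1 (n + 4), ((2 : ℝ) ^ (l + 2) - 2 * ((l : ℝ) + 2) - 1)
        ≤ 55 * (2 : ℝ) ^ (n + 4) *
        ∏ l ∈ Finset.Icc 1 (n + 4), ((2 : ℝ) ^ (l + 2) - 2 * ((l : ℝ) + 2) - 1) := by
      apply mul_le_mul_of_nonneg_right _ hQ0
      nlinarith
    have h3 := le_trans h h2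
    nlinarith
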